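/- If Π ⊢ G : ⟨φ,Λ⟩ is derivable for a ground g-choreography G, then for every maximal configuration x ∈ MaxC(⟦G⟧) and every participant A, the set of maximal events of the projection x↾A is either empty or a singleton. -/

import Mathlib

open scoped Classical

namespace Choreo

/-! ## Labels -/

/-- Communication labels: output `A B!m` and input `A B?m`. -/
inductive Label (P M : Type) where
  | out : P → P → M → Label P M
  | inp : P → P → M → Label P M

variable {P M : Type}

/-- The subject of a label: the sender of an output, the receiver of an input. -/
def Label.sbj : Label P M → P
  | .out a _ _ => a
  | .inp _ b _ => b

/-- The set `L^!` of output labels (sender and receiver distinct). -/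
def Lout : Set (Label P M) := {l | ∃ a b m, a ≠ b ∧ l = .out a b m}

/-- The set `L^?` of input labels (sender and receiver distinct). -/
def Lin : Set (Label P M) := {l | ∃ a b m, a ≠ b ∧ l = .inp a b m}

/-- `L̂(A)`: the labels in `L` whose subject is `A`. -/
def hat (L : Set (Label P M)) (A : P) : Set (Label P M) := {l ∈ L | l.sbj = A}

/-- `sbj(L)`: the set of subjects of the labels in `L`. -/
def sbjSet (L : Set (Label P M)) : Set P := Label.sbj '' L

/-- `L − Π`: the labels in `L` whose subject is not in `Π`. -/
def lminus (L : Set (Label P M)) (Γ : Set P) : Set (Label P M) := {l ∈ L | l.sbj ∉ Γ}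

/-! ## Labelled event structures (events drawn from ℕ) -/

/-- Data of a labelled (prime) event structure over events drawn from `ℕ`. -/
structure ES (P M : Type) where
  ev : Set ℕ
  le : ℕ → ℕ → Prop
  conf : ℕ → ℕ → Prop
  lbl : ℕ → Label P M

namespace ES

variable (E : ES P M)

/-- Configurations: downward-closed conflict-free sets of events. -/
def Config (x : Set ℕ) : Prop :=
  x ⊆ E.ev ∧ (∀ e ∈ x, ∀ f ∈ E.ev, E.le f e → f ∈ x) ∧
    ∀ e ∈ x, ∀ f ∈ x, ¬ E.conf e f

/-- `MaxC E`: the ⊆-maximal configurations of `E`. -/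
def MaxC : Set (Set ℕ) := {x | E.Config x ∧ ∀ y, E.Config y → x ⊆ y → y = x}

/-- Minimal events of `s ⊆ E.ev` with respect to `E.le`. -/
def minIn (s : Set ℕ) : Set ℕ := {e ∈ s | ∀ f ∈ s, E.le f e → f = e}

/-- Maximal events of `s ⊆ E.ev` with respect to `E.le`. -/
def maxIn (s : Set ℕ) : Set ℕ := {e ∈ s | ∀ f ∈ s, E.le e f → f = e}

def minEv : Set ℕ := E.minIn E.ev
def maxEv : Set ℕ := E.maxIn E.ev

/-- Labels of the minimal events of `E`. -/
def minLbl : Set (Label P M) := E.lbl '' E.minEv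

/-- Labels of the maximal events of `E`. -/
def maxLbl : Set (Label P M) := E.lbl '' E.maxEv

/-- All labels occurring in `E`. -/
def lblSet : Set (Label P M) := E.lbl '' E.ev

/-- The projection `E↾A`: the restriction of `E` to the events whose label has subject `A`. -/
def proj (A : P) : ES P M where
  ev := {e ∈ E.ev | (E.lbl e).sbj = A}
  le u v := E.le u v ∧ (u ∈ E.ev ∧ (E.lbl u).sbj = A) ∧ (v ∈ E.ev ∧ (E.lbl v).sbj = A)
  conf u v := E.conf u v ∧ (u ∈ E.ev ∧ (E.lbl u).sbj = A) ∧ (v ∈ E.ev ∧ (E.lbl v).sbj = A)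
  lbl := E.lbl

/-- The projection `x↾A` of a configuration (as a set of events of `E`). -/
def projC (x : Set ℕ) (A : P) : Set ℕ := {e ∈ x | (E.lbl e).sbj = A}

end ES

/-! ## Constructions on event structures -/

/-- Tag for the events of a left component. -/
def tagL (e : ℕ) : ℕ := Nat.pair 0 e
/-- Tag for the events of a right component. -/
def tagR (e : ℕ) : ℕ := Nat.pair 1 e
/-- Tag for the events of the copy of the second component indexed by (the code of) a
maximal configuration of the first one. -/
def tagC (k e : ℕ) : ℕ := Nat.pair 1 (Nat.pair k e)

/-- A code (injective on finite sets) of sets of naturals. -/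
noncomputable def encSet (x : Set ℕ) : ℕ :=
  if h : x.Finite then h.toFinset.sum (fun n => 2 ^ n) else 0

/-- The empty event structure `ε`. -/
noncomputable def esEmpty [Nonempty P] [Nonempty M] : ES P M where
  ev := ∅
  le _ _ := False
  conf _ _ := False
  lbl _ := Label.out Classical.ofNonempty Classical.ofNonempty Classical.ofNonempty

/-- `⟦A→B:m⟧`: two ordered events labelled `A B!m < A B?m`. -/
def esAct (a b : P) (m : M) : ES P M where
  ev := {0, 1}
  le u v := (u = 0 ∧ v = 0) ∨ (u = 0 ∧ v = 1) ∨ (u = 1 ∧ v = 1)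
  conf _ _ := False
  lbl e := if e = 0 then Label.out a b m else Label.inp a b m

/-- Tensor product `E1 ⊗ E2` (componentwise disjoint union). -/
def esTensor (E1 E2 : ES P M) : ES P M where
  ev := (tagL '' E1.ev) ∪ (tagR '' E2.ev)
  le u v := (∃ e ∈ E1.ev, ∃ f ∈ E1.ev, E1.le e f ∧ u = tagL e ∧ v = tagL f) ∨
            (∃ e ∈ E2.ev, ∃ f ∈ E2.ev, E2.le e f ∧ u = tagR e ∧ v = tagR f)
  conf u v := (∃ e ∈ E1.ev, ∃ f ∈ E1.ev, E1.conf e f ∧ u = tagL e ∧ v = tagL f) ∨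
              (∃ e ∈ E2.ev, ∃ f ∈ E2.ev, E2.conf e f ∧ u = tagR e ∧ v = tagR f)
  lbl u := if (Nat.unpair u).1 = 0 then E1.lbl (Nat.unpair u).2 else E2.lbl (Nat.unpair u).2

/-- Sum `E1 + E2`: disjoint union with all cross pairs of events in conflict. -/
def esSum (E1 E2 : ES P M) : ES P M :=
  { esTensor E1 E2 with
    conf := fun u v => (esTensor E1 E2).conf u v ∨
      (∃ e ∈ E1.ev, ∃ f ∈ E2.ev, (u = tagL e ∧ v = tagR f) ∨ (u = tagR f ∧ v = tagL e)) }

/-- Sequential composition: appends to each maximal configuration `x` of `E1` a disjoint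
copy of `E2`, ordering an event of `x` below an event of the copy whenever their labels
have the same subject. -/
noncomputable def esSeq (E1 E2 : ES P M) : ES P M where
  ev := (tagL '' E1.ev) ∪ {u | ∃ x ∈ E1.MaxC, ∃ e ∈ E2.ev, u = tagC (encSet x) e}
  le u v :=
    (∃ e ∈ E1.ev, ∃ f ∈ E1.ev, E1.le e f ∧ u = tagL e ∧ v = tagL f) ∨
    (∃ x ∈ E1.MaxC, ∃ e ∈ E2.ev, ∃ f ∈ E2.ev, E2.le e f ∧
       u = tagC (encSet x) e ∧ v = tagC (encSet x) f) ∨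
    (∃ x ∈ E1.MaxC, ∃ e ∈ x, ∃ f ∈ E2.ev, (E1.lbl e).sbj = (E2.lbl f).sbj ∧
       u = tagL e ∧ v = tagC (encSet x) f)
  conf u v :=
    (∃ e ∈ E1.ev, ∃ f ∈ E1.ev, E1.conf e f ∧ u = tagL e ∧ v = tagL f) ∨
    (∃ x ∈ E1.MaxC, ∃ e ∈ E2.ev, ∃ f ∈ E2.ev, E2.conf e f ∧
       u = tagC (encSet x) e ∧ v = tagC (encSet x) f) ∨
    (∃ x ∈ E1.MaxC, ∃ x' ∈ E1.MaxC, x ≠ x' ∧ ∃ e ∈ E2.ev, ∃ f ∈ E2.ev,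
       u = tagC (encSet x) e ∧ v = tagC (encSet x') f) ∨
    (∃ x ∈ E1.MaxC, ∃ e ∈ E1.ev, (∃ e' ∈ x, E1.conf e e') ∧ ∃ f ∈ E2.ev,
       ((u = tagL e ∧ v = tagC (encSet x) f) ∨ (u = tagC (encSet x) f ∧ v = tagL e)))
  lbl u := if (Nat.unpair u).1 = 0 then E1.lbl (Nat.unpair u).2
           else E2.lbl (Nat.unpair (Nat.unpair u).2).2

/-! ## Well-branchedness -/

/-- Labels of the minimal events of the projection `E↾A`. -/
def minLblP (E : ES P M) (A : P) : Set (Label P M) := (E.proj A).minLbl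

/-- `A` is active for the branches `E1`, `E2`. -/
def active (E1 E2 : ES P M) (A : P) : Prop :=
  minLblP E1 A ≠ ∅ ∧ minLblP E2 A ≠ ∅ ∧
  Disjoint (minLblP E1 A) (minLblP E2 A) ∧
  minLblP E1 A ∪ minLblP E2 A ⊆ Lout

/-- `B` is passive for the branches `E1`, `E2`. -/
def passive (E1 E2 : ES P M) (B : P) : Prop :=
  Disjoint (minLblP E1 B) (minLblP E2 B) ∧
  minLblP E1 B ∪ minLblP E2 B ⊆ Lin ∧
  (minLblP E1 B = ∅ ↔ minLblP E2 B = ∅)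

/-- Well-branchedness: a unique active participant, all other participants passive. -/
def wb (E1 E2 : ES P M) : Prop :=
  ∃ A, active E1 E2 A ∧ (∀ A', active E1 E2 A' → A' = A) ∧
    ∀ B, B ≠ A → passive E1 E2 B

/-! ## Ground g-choreographies and their semantics -/

/-- Ground g-choreographies: `G ::= 0 | A→B:m | G;G | G|G | G+G`. -/
inductive GC (P M : Type) where
  | nil : GC P M
  | act : P → P → M → GC P M
  | seq : GC P M → GC P M → GC P M
  | par : GC P M → GC P M → GC P M
  | cho : GC P M → GC P M → GC P M

/-- `P(G)`: the participants occurring in `G`. -/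
def parts : GC P M → Set P
  | .nil => ∅
  | .act a b _ => {a, b}
  | .seq g1 g2 => parts g1 ∪ parts g2
  | .par g1 g2 => parts g1 ∪ parts g2
  | .cho g1 g2 => parts g1 ∪ parts g2

/-- The semantics `⟦G⟧`: a labelled event structure, or `none` (i.e. `⊥`) when a side
condition fails (the grammar requires `A ≠ B` in interactions; parallel requires disjoint
label sets; choice requires well-branchedness). -/
noncomputable def gsem [Nonempty P] [Nonempty M] : GC P M → Option (ES P M)
  | .nil => some esEmpty
  | .act a b m => if a = b then none else some (esAct a b m)
  | .seq g1 g2 =>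
      match gsem g1, gsem g2 with
      | some E1, some E2 => some (esSeq E1 E2)
      | _, _ => none
  | .par g1 g2 =>
      match gsem g1, gsem g2 with
      | some E1, some E2 =>
          if Disjoint E1.lblSet E2.lblSet then some (esTensor E1 E2) else none
      | _, _ => none
  | .cho g1 g2 =>
      match gsem g1, gsem g2 with
      | some E1, some E2 => if wb E1 E2 then some (esSum E1 E2) else none
      | _, _ => none

/-! ## The typing system -/

/-- Output uniform sets of labels. -/
def outUniform (U V : Set (Label P M)) : Prop := Disjoint U V ∧ U ∪ V ⊆ Lout

/-- Input uniform sets of labels. -/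
def inUniform (U V : Set (Label P M)) : Prop := Disjoint U V ∧ U ∪ V ⊆ Lin

/-- The compatibility condition `compch(φ1,φ2,Π)` of rule t-ch. -/
def compch (φ1 φ2 : Set (Label P M)) (Γ : Set P) : Prop :=
  ∃ A ∈ Γ,
    (outUniform (hat φ1 A) (hat φ2 A) ∧ hat φ1 A ≠ ∅ ∧ hat φ2 A ≠ ∅) ∧
    (∀ A' ∈ Γ, (outUniform (hat φ1 A') (hat φ2 A') ∧ hat φ1 A' ≠ ∅ ∧ hat φ2 A' ≠ ∅) →
        A' = A) ∧
    ∀ B ∈ Γ, B ≠ A →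
      inUniform (hat φ1 B) (hat φ2 B) ∧ (hat φ1 B = ∅ ↔ hat φ2 B = ∅)

/-- The typing judgement `Π ⊢ G : ⟨φ,Λ⟩`. -/
inductive Typing : Set P → GC P M → Set (Label P M) → Set (Label P M) → Prop where
  | temp : Typing ∅ GC.nil ∅ ∅
  | tint {a b : P} {m : M} (hab : a ≠ b) :
      Typing {a, b} (GC.act a b m)
        {Label.out a b m, Label.inp a b m} {Label.out a b m, Label.inp a b m}
  | tseq {Γ1 Γ2 : Set P} {g1 g2 : GC P M} {φ1 φ2 Λ1 Λ2 : Set (Label P M)} :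
      Typing Γ1 g1 φ1 Λ1 → Typing Γ2 g2 φ2 Λ2 →
      Typing (Γ1 ∪ Γ2) (GC.seq g1 g2) (φ1 ∪ lminus φ2 Γ1) (Λ2 ∪ lminus Λ1 Γ2)
  | tpar {Γ1 Γ2 : Set P} {g1 g2 : GC P M} {φ1 φ2 Λ1 Λ2 : Set (Label P M)} :
      Typing Γ1 g1 φ1 Λ1 → Typing Γ2 g2 φ2 Λ2 → Γ1 ∩ Γ2 = ∅ →
      Typing (Γ1 ∪ Γ2) (GC.par g1 g2) (φ1 ∪ φ2) (Λ1 ∪ Λ2)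
  | tch {Γ : Set P} {g1 g2 : GC P M} {φ1 φ2 Λ1 Λ2 : Set (Label P M)} :
      Typing Γ g1 φ1 Λ1 → Typing Γ g2 φ2 Λ2 → compch φ1 φ2 Γ →
      Typing Γ (GC.cho g1 g2) (φ1 ∪ φ2) (Λ1 ∪ Λ2)


/-! ## One-hole contexts and their typing (hole axiom `Γh ⊢ [·] : ⟨φh,Λh⟩`) -/

/-- g-choreography contexts with a single hole. -/
inductive Ctx (P M : Type) where
  | hole : Ctx P M
  | seqL : Ctx P M → GC P M → Ctx P M
  | seqR : GC P M → Ctx P M → Ctx P M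
  | parL : Ctx P M → GC P M → Ctx P M
  | parR : GC P M → Ctx P M → Ctx P M
  | choL : Ctx P M → GC P M → Ctx P M
  | choR : GC P M → Ctx P M → Ctx P M

/-- `C.fill g = C[g]`, the replacement of the hole of `C` by `g`. -/
def Ctx.fill : Ctx P M → GC P M → GC P M
  | .hole, g => g
  | .seqL c g2, g => GC.seq (c.fill g) g2
  | .seqR g1 c, g => GC.seq g1 (c.fill g)
  | .parL c g2, g => GC.par (c.fill g) g2
  | .parR g1 c, g => GC.par g1 (c.fill g)
  | .choL c g2, g => GC.cho (c.fill g) g2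
  | .choR g1 c, g => GC.cho g1 (c.fill g)

/-- Typing of one-hole contexts in the type system extended with the axiom
`Γh ⊢ [·] : ⟨φh,Λh⟩` for the hole. -/
inductive CTyping (Γh : Set P) (φh Λh : Set (Label P M)) :
    Set P → Ctx P M → Set (Label P M) → Set (Label P M) → Prop where
  | hole : CTyping Γh φh Λh Γh Ctx.hole φh Λh
  | seqL {Γ1 Γ2 : Set P} {c : Ctx P M} {g : GC P M} {φ1 φ2 Λ1 Λ2 : Set (Label P M)} :
      CTyping Γh φh Λh Γ1 c φ1 Λ1 → Typing Γ2 g φ2 Λ2 →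
      CTyping Γh φh Λh (Γ1 ∪ Γ2) (Ctx.seqL c g) (φ1 ∪ lminus φ2 Γ1) (Λ2 ∪ lminus Λ1 Γ2)
  | seqR {Γ1 Γ2 : Set P} {g : GC P M} {c : Ctx P M} {φ1 φ2 Λ1 Λ2 : Set (Label P M)} :
      Typing Γ1 g φ1 Λ1 → CTyping Γh φh Λh Γ2 c φ2 Λ2 →
      CTyping Γh φh Λh (Γ1 ∪ Γ2) (Ctx.seqR g c) (φ1 ∪ lminus φ2 Γ1) (Λ2 ∪ lminus Λ1 Γ2)
  | parL {Γ1 Γ2 : Set P} {c : Ctx P M} {g : GC P M} {φ1 φ2 Λ1 Λ2 : Set (Label P M)} :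
      CTyping Γh φh Λh Γ1 c φ1 Λ1 → Typing Γ2 g φ2 Λ2 → Γ1 ∩ Γ2 = ∅ →
      CTyping Γh φh Λh (Γ1 ∪ Γ2) (Ctx.parL c g) (φ1 ∪ φ2) (Λ1 ∪ Λ2)
  | parR {Γ1 Γ2 : Set P} {g : GC P M} {c : Ctx P M} {φ1 φ2 Λ1 Λ2 : Set (Label P M)} :
      Typing Γ1 g φ1 Λ1 → CTyping Γh φh Λh Γ2 c φ2 Λ2 → Γ1 ∩ Γ2 = ∅ →
      CTyping Γh φh Λh (Γ1 ∪ Γ2) (Ctx.parR g c) (φ1 ∪ φ2) (Λ1 ∪ Λ2)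
  | choL {Γ : Set P} {c : Ctx P M} {g : GC P M} {φ1 φ2 Λ1 Λ2 : Set (Label P M)} :
      CTyping Γh φh Λh Γ c φ1 Λ1 → Typing Γ g φ2 Λ2 → compch φ1 φ2 Γ →
      CTyping Γh φh Λh Γ (Ctx.choL c g) (φ1 ∪ φ2) (Λ1 ∪ Λ2)
  | choR {Γ : Set P} {g : GC P M} {c : Ctx P M} {φ1 φ2 Λ1 Λ2 : Set (Label P M)} :
      Typing Γ g φ1 Λ1 → CTyping Γh φh Λh Γ c φ2 Λ2 → compch φ1 φ2 Γ →
      CTyping Γh φh Λh Γ (Ctx.choR g c) (φ1 ∪ φ2) (Λ1 ∪ Λ2)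

/-! ## Refinable actions, t-ref, and refinement -/

/-- The three side conditions of the axiom schema t-ref for the refinable action
`A → m1…mn : B1,…,Bn`, represented by the initiator `A` and the nonempty list
`l = [(m1,B1),…,(mn,Bn)]` with pairwise distinct `Bi`. -/
def trefCond (Γ : Set P) (φ Λ : Set (Label P M)) (A : P) (l : List (M × P)) : Prop :=
  l ≠ [] ∧ (l.map Prod.snd).Nodup ∧
  sbjSet φ = Γ ∧ sbjSet Λ = Γ ∧ sbjSet (φ ∩ Lout) = {A} ∧
  ∀ p ∈ l, ∃ C ∈ Γ, hat Λ p.2 = {Label.inp C p.2 p.1}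

/-- `G ref A→m1…mn:B1,…,Bn`: the ground g-choreography `G` refines the refinable action
given by initiator `A` and list `l = [(m1,B1),…,(mn,Bn)]`. -/
def Refines [Nonempty P] [Nonempty M] (G : GC P M) (A : P) (l : List (M × P)) : Prop :=
  ∃ E : ES P M, gsem G = some E ∧
    sbjSet E.minLbl = {A} ∧
    ∀ x ∈ E.MaxC, ∀ p ∈ l, ∃ C ∈ parts G,
      Label.inp C p.2 p.1 ∈ E.lbl '' (E.maxIn (E.projC x p.2))

/-! ## Multi-hole contexts -/

/-- g-choreography contexts with (numbered) holes. -/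
inductive MCtx (P M : Type) where
  | hole : ℕ → MCtx P M
  | nil : MCtx P M
  | act : P → P → M → MCtx P M
  | seq : MCtx P M → MCtx P M → MCtx P M
  | par : MCtx P M → MCtx P M → MCtx P M
  | cho : MCtx P M → MCtx P M → MCtx P M

/-- The (indices of the) holes occurring in a multi-hole context. -/
def MCtx.holes : MCtx P M → List ℕ
  | .hole i => [i]
  | .nil => []
  | .act _ _ _ => []
  | .seq c1 c2 => c1.holes ++ c2.holes
  | .par c1 c2 => c1.holes ++ c2.holes
  | .cho c1 c2 => c1.holes ++ c2.holes

/-- `C.fill g`: replace each hole `[·]i` by `g i`. -/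
def MCtx.fill : MCtx P M → (ℕ → GC P M) → GC P M
  | .hole i, g => g i
  | .nil, _ => GC.nil
  | .act a b m, _ => GC.act a b m
  | .seq c1 c2, g => GC.seq (c1.fill g) (c2.fill g)
  | .par c1 c2, g => GC.par (c1.fill g) (c2.fill g)
  | .cho c1 c2, g => GC.cho (c1.fill g) (c2.fill g)

/-- Typing of multi-hole contexts in the extended type system, where hole `i` is typed by
the axiom `(σ i).1 ⊢ [·]i : ⟨(σ i).2.1, (σ i).2.2⟩`. -/
inductive MTyping (σ : ℕ → Set P × Set (Label P M) × Set (Label P M)) :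
    Set P → MCtx P M → Set (Label P M) → Set (Label P M) → Prop where
  | hole (i : ℕ) : MTyping σ (σ i).1 (MCtx.hole i) (σ i).2.1 (σ i).2.2
  | temp : MTyping σ ∅ MCtx.nil ∅ ∅
  | tint {a b : P} {m : M} (hab : a ≠ b) :
      MTyping σ {a, b} (MCtx.act a b m)
        {Label.out a b m, Label.inp a b m} {Label.out a b m, Label.inp a b m}
  | tseq {Γ1 Γ2 : Set P} {c1 c2 : MCtx P M} {φ1 φ2 Λ1 Λ2 : Set (Label P M)} :
      MTyping σ Γ1 c1 φ1 Λ1 → MTyping σ Γ2 c2 φ2 Λ2 →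
      MTyping σ (Γ1 ∪ Γ2) (MCtx.seq c1 c2) (φ1 ∪ lminus φ2 Γ1) (Λ2 ∪ lminus Λ1 Γ2)
  | tpar {Γ1 Γ2 : Set P} {c1 c2 : MCtx P M} {φ1 φ2 Λ1 Λ2 : Set (Label P M)} :
      MTyping σ Γ1 c1 φ1 Λ1 → MTyping σ Γ2 c2 φ2 Λ2 → Γ1 ∩ Γ2 = ∅ →
      MTyping σ (Γ1 ∪ Γ2) (MCtx.par c1 c2) (φ1 ∪ φ2) (Λ1 ∪ Λ2)
  | tch {Γ : Set P} {c1 c2 : MCtx P M} {φ1 φ2 Λ1 Λ2 : Set (Label P M)} :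
      MTyping σ Γ c1 φ1 Λ1 → MTyping σ Γ c2 φ2 Λ2 → compch φ1 φ2 Γ →
      MTyping σ Γ (MCtx.cho c1 c2) (φ1 ∪ φ2) (Λ1 ∪ Λ2)


/-! ## Auxiliary development for the proof -/

section ProofAux

variable {P M : Type}

lemma tagL_inj {a b : ℕ} (h : tagL a = tagL b) : a = b := by
  simpa [tagL, Nat.pair_eq_pair] using h

lemma tagR_inj {a b : ℕ} (h : tagR a = tagR b) : a = b := by
  simpa [tagR, Nat.pair_eq_pair] using h

lemma tagL_ne_tagR {a b : ℕ} : tagL a ≠ tagR b := by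
  simp [tagL, tagR, Nat.pair_eq_pair]

lemma tagL_ne_tagC {a k e : ℕ} : tagL a ≠ tagC k e := by
  simp [tagL, tagC, Nat.pair_eq_pair]

lemma tagC_inj {k e k' e' : ℕ} (h : tagC k e = tagC k' e') : k = k' ∧ e = e' := by
  have := (Nat.pair_eq_pair.mp h).2
  exact Nat.pair_eq_pair.mp this

lemma esSeq_lbl_tagL (E1 E2 : ES P M) (e : ℕ) : (esSeq E1 E2).lbl (tagL e) = E1.lbl e := by
  simp [esSeq, tagL]

lemma esSeq_lbl_tagC (E1 E2 : ES P M) (k e : ℕ) : (esSeq E1 E2).lbl (tagC k e) = E2.lbl e := by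
  simp [esSeq, tagC]

lemma esTensor_lbl_tagL (E1 E2 : ES P M) (e : ℕ) : (esTensor E1 E2).lbl (tagL e) = E1.lbl e := by
  simp [esTensor, tagL]

lemma esTensor_lbl_tagR (E1 E2 : ES P M) (e : ℕ) : (esTensor E1 E2).lbl (tagR e) = E2.lbl e := by
  simp [esTensor, tagR]

lemma esSum_lbl_tagL (E1 E2 : ES P M) (e : ℕ) : (esSum E1 E2).lbl (tagL e) = E1.lbl e :=
  esTensor_lbl_tagL E1 E2 e

lemma esSum_lbl_tagR (E1 E2 : ES P M) (e : ℕ) : (esSum E1 E2).lbl (tagR e) = E2.lbl e :=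
  esTensor_lbl_tagR E1 E2 e

/-- The invariant preserved by the semantics of typable g-choreographies. -/
structure Inv (Γ : Set P) (E : ES P M) : Prop where
  refl : ∀ e ∈ E.ev, E.le e e
  symm : ∀ u v, E.conf u v → E.conf v u
  hered : ∀ u v w, E.conf u v → E.le v w → E.conf u w
  sbj : ∀ e ∈ E.ev, (E.lbl e).sbj ∈ Γ
  comp : ∀ x, E.Config x → ∀ e ∈ x, ∀ f ∈ x,
    (E.lbl e).sbj = (E.lbl f).sbj → E.le e f ∨ E.le f e

lemma conf_of_rtg {E : ES P M}
    (hhered : ∀ u v w, E.conf u v → E.le v w → E.conf u w)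
    {u f e : ℕ} (hc : E.conf u f) (h : Relation.ReflTransGen E.le f e) : E.conf u e := by
  induction h with
  | refl => exact hc
  | tail _ hle ih => exact hhered _ _ _ ih hle

/-- A maximal configuration absorbs any event not in conflict with it. -/
lemma absorb {E : ES P M}
    (hsymm : ∀ u v, E.conf u v → E.conf v u)
    (hhered : ∀ u v w, E.conf u v → E.le v w → E.conf u w)
    {x : Set ℕ} (hx : x ∈ E.MaxC) {e : ℕ} (he : e ∈ E.ev)
    (hirr : ¬ E.conf e e) (hnc : ∀ e' ∈ x, ¬ E.conf e' e) : e ∈ x := by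
  have hy : E.Config (x ∪ {f | f ∈ E.ev ∧ Relation.ReflTransGen E.le f e}) := by
    refine ⟨?_, ?_, ?_⟩
    · rintro u (hu | hu)
      · exact hx.1.1 hu
      · exact hu.1
    · rintro u (hu | hu) g hg hle
      · exact Or.inl (hx.1.2.1 u hu g hg hle)
      · exact Or.inr ⟨hg, Relation.ReflTransGen.head hle hu.2⟩
    · rintro u (hu | hu) v (hv | hv) hc
      · exact hx.1.2.2 u hu v hv hc
      · exact hnc u hu (conf_of_rtg hhered hc hv.2)
      · exact hnc v hv (conf_of_rtg hhered (hsymm _ _ hc) hu.2)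
      · exact hirr (conf_of_rtg hhered (hsymm _ _ (conf_of_rtg hhered hc hv.2)) hu.2)
  have hxy := hx.2 _ hy Set.subset_union_left
  rw [← hxy]
  exact Or.inr ⟨he, Relation.ReflTransGen.refl⟩

lemma invEmpty [Nonempty P] [Nonempty M] : Inv (∅ : Set P) (esEmpty (P := P) (M := M)) where
  refl e he := absurd he (by simp [esEmpty])
  symm _ _ h := h.elim
  hered _ _ _ h _ := h.elim
  sbj e he := absurd he (by simp [esEmpty])
  comp x hx e he _ _ _ := absurd (hx.1 he) (by simp [esEmpty])

lemma invAct {a b : P} {m : M} (hab : a ≠ b) : Inv {a, b} (esAct a b m) := by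
  refine ⟨?_, ?_, ?_, ?_, ?_⟩
  · intro e he
    rcases he with rfl | he
    · exact Or.inl ⟨rfl, rfl⟩
    · rcases he with rfl
      exact Or.inr (Or.inr ⟨rfl, rfl⟩)
  · intro u v h; exact h.elim
  · intro u v w h _; exact h.elim
  · intro e he
    rcases he with rfl | he
    · simp [esAct, Label.sbj]
    · rcases he with rfl
      simp [esAct, Label.sbj]
  · intro x hx e he f hf hs
    have he' := hx.1 he
    have hf' := hx.1 hf
    rcases he' with rfl | he' <;> rcases hf' with rfl | hf'
    · exact Or.inl (Or.inl ⟨rfl, rfl⟩)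
    · rcases hf' with rfl
      exact Or.inl (Or.inr (Or.inl ⟨rfl, rfl⟩))
    · rcases he' with rfl
      have hba : b = a := by simpa [esAct, Label.sbj] using hs
      exact absurd hba.symm hab
    · rcases he' with rfl
      rcases hf' with rfl
      exact Or.inl (Or.inr (Or.inr ⟨rfl, rfl⟩))

lemma invTensor {Γ1 Γ2 : Set P} {E1 E2 : ES P M} (I1 : Inv Γ1 E1) (I2 : Inv Γ2 E2)
    (hdisj : Γ1 ∩ Γ2 = ∅) : Inv (Γ1 ∪ Γ2) (esTensor E1 E2) := by
  refine ⟨?_, ?_, ?_, ?_, ?_⟩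
  · rintro u (⟨e, he, rfl⟩ | ⟨e, he, rfl⟩)
    · exact Or.inl ⟨e, he, e, he, I1.refl e he, rfl, rfl⟩
    · exact Or.inr ⟨e, he, e, he, I2.refl e he, rfl, rfl⟩
  · rintro u v (⟨e, he, f, hf, hc, rfl, rfl⟩ | ⟨e, he, f, hf, hc, rfl, rfl⟩)
    · exact Or.inl ⟨f, hf, e, he, I1.symm _ _ hc, rfl, rfl⟩
    · exact Or.inr ⟨f, hf, e, he, I2.symm _ _ hc, rfl, rfl⟩
  · rintro u v w (⟨e, he, f, hf, hc, rfl, rfl⟩ | ⟨e, he, f, hf, hc, rfl, rfl⟩)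
      (⟨p, hp, q, hq, hl, hv, rfl⟩ | ⟨p, hp, q, hq, hl, hv, rfl⟩)
    · obtain rfl := tagL_inj hv
      exact Or.inl ⟨e, he, q, hq, I1.hered _ _ _ hc hl, rfl, rfl⟩
    · exact absurd hv tagL_ne_tagR
    · exact absurd hv.symm tagL_ne_tagR
    · obtain rfl := tagR_inj hv
      exact Or.inr ⟨e, he, q, hq, I2.hered _ _ _ hc hl, rfl, rfl⟩
  · rintro u (⟨e, he, rfl⟩ | ⟨e, he, rfl⟩)
    · rw [esTensor_lbl_tagL]; exact Set.mem_union_left _ (I1.sbj e he)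
    · rw [esTensor_lbl_tagR]; exact Set.mem_union_right _ (I2.sbj e he)
  · intro x hx e he f hf hs
    have cfg1 : E1.Config {g | g ∈ E1.ev ∧ tagL g ∈ x} :=
      ⟨fun g hg => hg.1,
       fun g hg g' hg' hle => ⟨hg', hx.2.1 _ hg.2 _ (Or.inl ⟨g', hg', rfl⟩)
         (Or.inl ⟨g', hg', g, hg.1, hle, rfl, rfl⟩)⟩,
       fun g hg g' hg' hc => hx.2.2 _ hg.2 _ hg'.2 (Or.inl ⟨g, hg.1, g', hg'.1, hc, rfl, rfl⟩)⟩
    have cfg2 : E2.Config {g | g ∈ E2.ev ∧ tagR g ∈ x} :=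
      ⟨fun g hg => hg.1,
       fun g hg g' hg' hle => ⟨hg', hx.2.1 _ hg.2 _ (Or.inr ⟨g', hg', rfl⟩)
         (Or.inr ⟨g', hg', g, hg.1, hle, rfl, rfl⟩)⟩,
       fun g hg g' hg' hc => hx.2.2 _ hg.2 _ hg'.2 (Or.inr ⟨g, hg.1, g', hg'.1, hc, rfl, rfl⟩)⟩
    rcases hx.1 he with ⟨e1, he1, rfl⟩ | ⟨e2, he2, rfl⟩ <;>
      rcases hx.1 hf with ⟨f1, hf1, rfl⟩ | ⟨f2, hf2, rfl⟩
    · rw [esTensor_lbl_tagL, esTensor_lbl_tagL] at hs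
      rcases I1.comp _ cfg1 e1 ⟨he1, he⟩ f1 ⟨hf1, hf⟩ hs with hle | hle
      · exact Or.inl (Or.inl ⟨e1, he1, f1, hf1, hle, rfl, rfl⟩)
      · exact Or.inr (Or.inl ⟨f1, hf1, e1, he1, hle, rfl, rfl⟩)
    · rw [esTensor_lbl_tagL, esTensor_lbl_tagR] at hs
      have hmem : (E1.lbl e1).sbj ∈ Γ1 ∩ Γ2 :=
        ⟨I1.sbj e1 he1, by rw [hs]; exact I2.sbj f2 hf2⟩
      rw [hdisj] at hmem; exact hmem.elim
    · rw [esTensor_lbl_tagR, esTensor_lbl_tagL] at hs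
      have hmem : (E2.lbl e2).sbj ∈ Γ1 ∩ Γ2 :=
        ⟨by rw [hs]; exact I1.sbj f1 hf1, I2.sbj e2 he2⟩
      rw [hdisj] at hmem; exact hmem.elim
    · rw [esTensor_lbl_tagR, esTensor_lbl_tagR] at hs
      rcases I2.comp _ cfg2 e2 ⟨he2, he⟩ f2 ⟨hf2, hf⟩ hs with hle | hle
      · exact Or.inl (Or.inr ⟨e2, he2, f2, hf2, hle, rfl, rfl⟩)
      · exact Or.inr (Or.inr ⟨f2, hf2, e2, he2, hle, rfl, rfl⟩)

lemma invSum {Γ : Set P} {E1 E2 : ES P M} (I1 : Inv Γ E1) (I2 : Inv Γ E2) :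
    Inv Γ (esSum E1 E2) := by
  refine ⟨?_, ?_, ?_, ?_, ?_⟩
  · rintro u (⟨e, he, rfl⟩ | ⟨e, he, rfl⟩)
    · exact Or.inl ⟨e, he, e, he, I1.refl e he, rfl, rfl⟩
    · exact Or.inr ⟨e, he, e, he, I2.refl e he, rfl, rfl⟩
  · rintro u v ((⟨e, he, f, hf, hc, rfl, rfl⟩ | ⟨e, he, f, hf, hc, rfl, rfl⟩) |
      ⟨e, he, f, hf, (⟨rfl, rfl⟩ | ⟨rfl, rfl⟩)⟩)
    · exact Or.inl (Or.inl ⟨f, hf, e, he, I1.symm _ _ hc, rfl, rfl⟩)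
    · exact Or.inl (Or.inr ⟨f, hf, e, he, I2.symm _ _ hc, rfl, rfl⟩)
    · exact Or.inr ⟨e, he, f, hf, Or.inr ⟨rfl, rfl⟩⟩
    · exact Or.inr ⟨e, he, f, hf, Or.inl ⟨rfl, rfl⟩⟩
  · rintro u v w ((⟨e, he, f, hf, hc, rfl, rfl⟩ | ⟨e, he, f, hf, hc, rfl, rfl⟩) |
      ⟨e, he, f, hf, (⟨rfl, rfl⟩ | ⟨rfl, rfl⟩)⟩)
      (⟨p, hp, q, hq, hl, hv, rfl⟩ | ⟨p, hp, q, hq, hl, hv, rfl⟩)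
    · obtain rfl := tagL_inj hv
      exact Or.inl (Or.inl ⟨e, he, q, hq, I1.hered _ _ _ hc hl, rfl, rfl⟩)
    · exact absurd hv tagL_ne_tagR
    · exact absurd hv.symm tagL_ne_tagR
    · obtain rfl := tagR_inj hv
      exact Or.inl (Or.inr ⟨e, he, q, hq, I2.hered _ _ _ hc hl, rfl, rfl⟩)
    · exact absurd hv.symm tagL_ne_tagR
    · exact Or.inr ⟨e, he, q, hq, Or.inl ⟨rfl, rfl⟩⟩
    · obtain rfl := tagL_inj hv
      exact Or.inr ⟨q, hq, f, hf, Or.inr ⟨rfl, rfl⟩⟩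
    · exact absurd hv tagL_ne_tagR
  · rintro u (⟨e, he, rfl⟩ | ⟨e, he, rfl⟩)
    · rw [esSum_lbl_tagL]; exact I1.sbj e he
    · rw [esSum_lbl_tagR]; exact I2.sbj e he
  · intro x hx e he f hf hs
    have cfg1 : E1.Config {g | g ∈ E1.ev ∧ tagL g ∈ x} :=
      ⟨fun g hg => hg.1,
       fun g hg g' hg' hle => ⟨hg', hx.2.1 _ hg.2 _ (Or.inl ⟨g', hg', rfl⟩)
         (Or.inl ⟨g', hg', g, hg.1, hle, rfl, rfl⟩)⟩,
       fun g hg g' hg' hc => hx.2.2 _ hg.2 _ hg'.2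
         (Or.inl (Or.inl ⟨g, hg.1, g', hg'.1, hc, rfl, rfl⟩))⟩
    have cfg2 : E2.Config {g | g ∈ E2.ev ∧ tagR g ∈ x} :=
      ⟨fun g hg => hg.1,
       fun g hg g' hg' hle => ⟨hg', hx.2.1 _ hg.2 _ (Or.inr ⟨g', hg', rfl⟩)
         (Or.inr ⟨g', hg', g, hg.1, hle, rfl, rfl⟩)⟩,
       fun g hg g' hg' hc => hx.2.2 _ hg.2 _ hg'.2
         (Or.inl (Or.inr ⟨g, hg.1, g', hg'.1, hc, rfl, rfl⟩))⟩
    rcases hx.1 he with ⟨e1, he1, rfl⟩ | ⟨e2, he2, rfl⟩ <;>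
      rcases hx.1 hf with ⟨f1, hf1, rfl⟩ | ⟨f2, hf2, rfl⟩
    · rw [esSum_lbl_tagL, esSum_lbl_tagL] at hs
      rcases I1.comp _ cfg1 e1 ⟨he1, he⟩ f1 ⟨hf1, hf⟩ hs with hle | hle
      · exact Or.inl (Or.inl ⟨e1, he1, f1, hf1, hle, rfl, rfl⟩)
      · exact Or.inr (Or.inl ⟨f1, hf1, e1, he1, hle, rfl, rfl⟩)
    · exact (hx.2.2 _ he _ hf (Or.inr ⟨e1, he1, f2, hf2, Or.inl ⟨rfl, rfl⟩⟩)).elim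
    · exact (hx.2.2 _ he _ hf (Or.inr ⟨f1, hf1, e2, he2, Or.inr ⟨rfl, rfl⟩⟩)).elim
    · rw [esSum_lbl_tagR, esSum_lbl_tagR] at hs
      rcases I2.comp _ cfg2 e2 ⟨he2, he⟩ f2 ⟨hf2, hf⟩ hs with hle | hle
      · exact Or.inl (Or.inr ⟨e2, he2, f2, hf2, hle, rfl, rfl⟩)
      · exact Or.inr (Or.inr ⟨f2, hf2, e2, he2, hle, rfl, rfl⟩)

lemma invSeq {Γ1 Γ2 : Set P} {E1 E2 : ES P M} (I1 : Inv Γ1 E1) (I2 : Inv Γ2 E2) :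
    Inv (Γ1 ∪ Γ2) (esSeq E1 E2) := by
  refine ⟨?_, ?_, ?_, ?_, ?_⟩
  · rintro u (⟨e, he, rfl⟩ | ⟨xa, hxa, e, he, rfl⟩)
    · exact Or.inl ⟨e, he, e, he, I1.refl e he, rfl, rfl⟩
    · exact Or.inr (Or.inl ⟨xa, hxa, e, he, e, he, I2.refl e he, rfl, rfl⟩)
  · rintro u v (⟨e, he, f, hf, hc, rfl, rfl⟩ | ⟨xa, hxa, e, he, f, hf, hc, rfl, rfl⟩ |
      ⟨xa, hxa, xb, hxb, hne, e, he, f, hf, rfl, rfl⟩ |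
      ⟨xa, hxa, e, he, hce, f, hf, (⟨rfl, rfl⟩ | ⟨rfl, rfl⟩)⟩)
    · exact Or.inl ⟨f, hf, e, he, I1.symm _ _ hc, rfl, rfl⟩
    · exact Or.inr (Or.inl ⟨xa, hxa, f, hf, e, he, I2.symm _ _ hc, rfl, rfl⟩)
    · exact Or.inr (Or.inr (Or.inl ⟨xb, hxb, xa, hxa, hne.symm, f, hf, e, he, rfl, rfl⟩))
    · exact Or.inr (Or.inr (Or.inr ⟨xa, hxa, e, he, hce, f, hf, Or.inr ⟨rfl, rfl⟩⟩))
    · exact Or.inr (Or.inr (Or.inr ⟨xa, hxa, e, he, hce, f, hf, Or.inl ⟨rfl, rfl⟩⟩))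
  · rintro u v w (⟨e, he, f, hf, hcf, rfl, rfl⟩ | ⟨xa, hxa, e, he, f, hf, hcf, rfl, rfl⟩ |
      ⟨xa, hxa, xb, hxb, hne, e, he, f, hf, rfl, rfl⟩ |
      ⟨xa, hxa, e, he, ⟨e', he', hcf⟩, f, hf, (⟨rfl, rfl⟩ | ⟨rfl, rfl⟩)⟩)
      (⟨p, hp, q, hq, hlq, hv, rfl⟩ | ⟨xc, hxc, p, hp, q, hq, hlq, hv, rfl⟩ |
       ⟨xc, hxc, p, hpx, q, hq, hsb, hv, rfl⟩)
    -- C1 × L1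
    · obtain rfl := tagL_inj hv
      exact Or.inl ⟨e, he, q, hq, I1.hered _ _ _ hcf hlq, rfl, rfl⟩
    -- C1 × L2
    · exact absurd hv tagL_ne_tagC
    -- C1 × L3
    · obtain rfl := tagL_inj hv
      exact Or.inr (Or.inr (Or.inr ⟨xc, hxc, e, he, ⟨f, hpx, hcf⟩, q, hq, Or.inl ⟨rfl, rfl⟩⟩))
    -- C2 × L1
    · exact absurd hv.symm tagL_ne_tagC
    -- C2 × L2
    · obtain ⟨hk, rfl⟩ := tagC_inj hv
      by_cases hxx : xa = xc
      · subst hxx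
        exact Or.inr (Or.inl ⟨xa, hxa, e, he, q, hq, I2.hered _ _ _ hcf hlq, rfl, rfl⟩)
      · exact Or.inr (Or.inr (Or.inl ⟨xa, hxa, xc, hxc, hxx, e, he, q, hq, rfl, rfl⟩))
    -- C2 × L3
    · exact absurd hv.symm tagL_ne_tagC
    -- C3 × L1
    · exact absurd hv.symm tagL_ne_tagC
    -- C3 × L2
    · obtain ⟨hk, rfl⟩ := tagC_inj hv
      exact Or.inr (Or.inr (Or.inl ⟨xa, hxa, xb, hxb, hne, e, he, q, hq, rfl, by rw [hk]⟩))
    -- C3 × L3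
    · exact absurd hv.symm tagL_ne_tagC
    -- C4A × L1
    · exact absurd hv.symm tagL_ne_tagC
    -- C4A × L2
    · obtain ⟨hk, rfl⟩ := tagC_inj hv
      exact Or.inr (Or.inr (Or.inr ⟨xa, hxa, e, he, ⟨e', he', hcf⟩, q, hq,
        Or.inl ⟨rfl, by rw [hk]⟩⟩))
    -- C4A × L3
    · exact absurd hv.symm tagL_ne_tagC
    -- C4B × L1
    · obtain rfl := tagL_inj hv
      have h1 : E1.conf q e' :=
        I1.symm _ _ (I1.hered _ _ _ (I1.symm _ _ hcf) hlq)
      exact Or.inr (Or.inr (Or.inr ⟨xa, hxa, q, hq, ⟨e', he', h1⟩, f, hf, Or.inr ⟨rfl, rfl⟩⟩))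
    -- C4B × L2
    · exact absurd hv tagL_ne_tagC
    -- C4B × L3
    · obtain rfl := tagL_inj hv
      by_cases hxx : xc = xa
      · subst hxx
        exact absurd hcf (hxa.1.2.2 e hpx e' he')
      · exact Or.inr (Or.inr (Or.inl ⟨xa, hxa, xc, hxc, fun h => hxx h.symm, f, hf, q, hq,
          rfl, rfl⟩))
  · rintro u (⟨e, he, rfl⟩ | ⟨xa, hxa, e, he, rfl⟩)
    · rw [esSeq_lbl_tagL]; exact Set.mem_union_left _ (I1.sbj e he)
    · rw [esSeq_lbl_tagC]; exact Set.mem_union_right _ (I2.sbj e he)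
  · intro x hx e he f hf hs
    have hw1 : ∀ u ∈ x, ∀ v ∈ x, ∀ xa ∈ E1.MaxC, ∀ xb ∈ E1.MaxC,
        ∀ p ∈ E2.ev, ∀ q ∈ E2.ev,
        u = tagC (encSet xa) p → v = tagC (encSet xb) q → xa = xb := by
      intro u hu v hv xa hxa xb hxb p hp q hq hup hvq
      by_contra hne
      exact hx.2.2 u hu v hv
        (Or.inr (Or.inr (Or.inl ⟨xa, hxa, xb, hxb, hne, p, hp, q, hq, hup, hvq⟩)))
    have cfg1 : E1.Config {g | g ∈ E1.ev ∧ tagL g ∈ x} :=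
      ⟨fun g hg => hg.1,
       fun g hg g' hg' hle => ⟨hg', hx.2.1 _ hg.2 _ (Or.inl ⟨g', hg', rfl⟩)
         (Or.inl ⟨g', hg', g, hg.1, hle, rfl, rfl⟩)⟩,
       fun g hg g' hg' hc => hx.2.2 _ hg.2 _ hg'.2 (Or.inl ⟨g, hg.1, g', hg'.1, hc, rfl, rfl⟩)⟩
    rcases hx.1 he with ⟨e1, he1, rfl⟩ | ⟨xa, hxa, e2, he2, rfl⟩ <;>
      rcases hx.1 hf with ⟨f1, hf1, rfl⟩ | ⟨xb, hxb, f2, hf2, rfl⟩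
    -- LL
    · rw [esSeq_lbl_tagL, esSeq_lbl_tagL] at hs
      rcases I1.comp _ cfg1 e1 ⟨he1, he⟩ f1 ⟨hf1, hf⟩ hs with hle | hle
      · exact Or.inl (Or.inl ⟨e1, he1, f1, hf1, hle, rfl, rfl⟩)
      · exact Or.inr (Or.inl ⟨f1, hf1, e1, he1, hle, rfl, rfl⟩)
    -- LC
    · rw [esSeq_lbl_tagL, esSeq_lbl_tagC] at hs
      have hirr : ¬ E1.conf e1 e1 := fun hc =>
        hx.2.2 _ he _ he (Or.inl ⟨e1, he1, e1, he1, hc, rfl, rfl⟩)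
      have hnc : ∀ g ∈ xb, ¬ E1.conf g e1 := fun g hg hc =>
        hx.2.2 _ he _ hf (Or.inr (Or.inr (Or.inr
          ⟨xb, hxb, e1, he1, ⟨g, hg, I1.symm _ _ hc⟩, f2, hf2, Or.inl ⟨rfl, rfl⟩⟩)))
      have hmem : e1 ∈ xb := absorb I1.symm I1.hered hxb he1 hirr hnc
      exact Or.inl (Or.inr (Or.inr ⟨xb, hxb, e1, hmem, f2, hf2, hs, rfl, rfl⟩))
    -- CL
    · rw [esSeq_lbl_tagC, esSeq_lbl_tagL] at hs
      have hirr : ¬ E1.conf f1 f1 := fun hc =>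
        hx.2.2 _ hf _ hf (Or.inl ⟨f1, hf1, f1, hf1, hc, rfl, rfl⟩)
      have hnc : ∀ g ∈ xa, ¬ E1.conf g f1 := fun g hg hc =>
        hx.2.2 _ hf _ he (Or.inr (Or.inr (Or.inr
          ⟨xa, hxa, f1, hf1, ⟨g, hg, I1.symm _ _ hc⟩, e2, he2, Or.inl ⟨rfl, rfl⟩⟩)))
      have hmem : f1 ∈ xa := absorb I1.symm I1.hered hxa hf1 hirr hnc
      exact Or.inr (Or.inr (Or.inr ⟨xa, hxa, f1, hmem, e2, he2, hs.symm, rfl, rfl⟩))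
    -- CC
    · have hab := hw1 _ he _ hf xa hxa xb hxb e2 he2 f2 hf2 rfl rfl
      subst hab
      rw [esSeq_lbl_tagC, esSeq_lbl_tagC] at hs
      have cfg2 : E2.Config {g | g ∈ E2.ev ∧ tagC (encSet xa) g ∈ x} :=
        ⟨fun g hg => hg.1,
         fun g hg g' hg' hle => ⟨hg', hx.2.1 _ hg.2 _ (Or.inr ⟨xa, hxa, g', hg', rfl⟩)
           (Or.inr (Or.inl ⟨xa, hxa, g', hg', g, hg.1, hle, rfl, rfl⟩))⟩,
         fun g hg g' hg' hc => hx.2.2 _ hg.2 _ hg'.2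
           (Or.inr (Or.inl ⟨xa, hxa, g, hg.1, g', hg'.1, hc, rfl, rfl⟩))⟩
      rcases I2.comp _ cfg2 e2 ⟨he2, he⟩ f2 ⟨hf2, hf⟩ hs with hle | hle
      · exact Or.inl (Or.inr (Or.inl ⟨xa, hxa, e2, he2, f2, hf2, hle, rfl, rfl⟩))
      · exact Or.inr (Or.inr (Or.inl ⟨xa, hxa, f2, hf2, e2, he2, hle, rfl, rfl⟩))

lemma gsem_inv [Nonempty P] [Nonempty M] {Γ : Set P} {G : GC P M} {φ Λ : Set (Label P M)}
    (h : Typing Γ G φ Λ) : ∀ E : ES P M, gsem G = some E → Inv Γ E := by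
  induction h with
  | temp =>
    intro E hE
    simp only [gsem] at hE
    have hE' := Option.some.inj hE
    subst hE'
    exact invEmpty
  | @tint a b m hab =>
    intro E hE
    simp only [gsem] at hE
    rw [if_neg hab] at hE
    have hE' := Option.some.inj hE
    subst hE'
    exact invAct hab
  | @tseq Γ1 Γ2 g1 g2 φ1 φ2 Λ1 Λ2 t1 t2 ih1 ih2 =>
    intro E hE
    simp only [gsem] at hE
    rcases h1 : gsem (P := P) (M := M) g1 with _ | E1 <;>
      rcases h2 : gsem (P := P) (M := M) g2 with _ | E2 <;>
      rw [h1, h2] at hE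
    · cases hE
    · cases hE
    · cases hE
    · have hE' : esSeq E1 E2 = E := Option.some.inj hE
      subst hE'
      exact invSeq (ih1 E1 h1) (ih2 E2 h2)
  | @tpar Γ1 Γ2 g1 g2 φ1 φ2 Λ1 Λ2 t1 t2 hdisj ih1 ih2 =>
    intro E hE
    simp only [gsem] at hE
    rcases h1 : gsem (P := P) (M := M) g1 with _ | E1 <;>
      rcases h2 : gsem (P := P) (M := M) g2 with _ | E2 <;>
      rw [h1, h2] at hE
    · cases hE
    · cases hE
    · cases hE
    · have hE2 : (if Disjoint E1.lblSet E2.lblSet then some (esTensor E1 E2) else none) =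
          some E := hE
      by_cases hd : Disjoint E1.lblSet E2.lblSet
      · rw [if_pos hd] at hE2
        have hE' : esTensor E1 E2 = E := Option.some.inj hE2
        subst hE'
        exact invTensor (ih1 E1 h1) (ih2 E2 h2) hdisj
      · rw [if_neg hd] at hE2
        cases hE2
  | @tch Γ' g1 g2 φ1 φ2 Λ1 Λ2 t1 t2 hcc ih1 ih2 =>
    intro E hE
    simp only [gsem] at hE
    rcases h1 : gsem (P := P) (M := M) g1 with _ | E1 <;>
      rcases h2 : gsem (P := P) (M := M) g2 with _ | E2 <;>
      rw [h1, h2] at hE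
    · cases hE
    · cases hE
    · cases hE
    · have hE2 : (if wb E1 E2 then some (esSum E1 E2) else none) = some E := hE
      by_cases hd : wb E1 E2
      · rw [if_pos hd] at hE2
        have hE' : esSum E1 E2 = E := Option.some.inj hE2
        subst hE'
        exact invSum (ih1 E1 h1) (ih2 E2 h2)
      · rw [if_neg hd] at hE2
        cases hE2

end ProofAux

/-- If `Π ⊢ G : ⟨φ,Λ⟩` is derivable then for every maximal configuration `x` of `⟦G⟧`
and every participant `A`, the set of maximal events of `x↾A` is empty or a singleton. -/
theorem typable_max_proj_subsingleton {P M : Type} [Infinite P] [Infinite M]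
    {Γ : Set P} {G : GC P M} {φ Λ : Set (Label P M)}
    (h : Typing Γ G φ Λ) :
    ∀ E : ES P M, gsem G = some E → ∀ x ∈ E.MaxC, ∀ A : P,
      E.maxIn (E.projC x A) = ∅ ∨ ∃ e : ℕ, E.maxIn (E.projC x A) = {e} := by
  intro E hE x hx A
  have I := gsem_inv h E hE
  rcases Set.eq_empty_or_nonempty (E.maxIn (E.projC x A)) with h0 | ⟨e, he⟩
  · exact Or.inl h0
  · refine Or.inr ⟨e, Set.eq_singleton_iff_unique_mem.mpr ⟨he, ?_⟩⟩
    intro f hf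
    have hsbj : (E.lbl f).sbj = (E.lbl e).sbj := by rw [hf.1.2, he.1.2]
    rcases I.comp x hx.1 f hf.1.1 e he.1.1 hsbj with hle | hle
    · exact (hf.2 e he.1 hle).symm
    · exact he.2 f hf.1 hle

end Choreo
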